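/- Let T be a tree on the vertex set {0, 1, …, N} in which vertex 0 is a leaf, fix an arbitrary orientation of its N edges, and let A ∈ ℝ^{N×N} be its reduced incidence matrix (rows indexed by edges, columns by vertices 1,…,N, with entry +1 at the head of an edge, −1 at its tail, and 0 otherwise). Let {1,…,N} be partitioned into pairwise disjoint sets C, M, O with |M| = |O|. If there exists a family of pairwise vertex-disjoint paths of the tree induced by T on {1,…,N}, one path for each node of O, each starting at that node of O and ending at a node of M, then there exists a diagonal N×N real matrix D with all diagonal entries nonzero such that the square matrix (A_{:,C∪M})ᵀ · D · (A_{:,C∪O}) is invertible, where A_{:,S} denotes the submatrix of A consisting of the columns indexed by S. -/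

import Mathlib

open Matrix

lemma aux_det_ne_zero_of_tri {n : Type*} [Fintype n] [DecidableEq n]
    (P : Matrix n n ℝ) (h : n → ℕ)
    (hdiag : ∀ i, P i i ≠ 0)
    (htri : ∀ i j, P i j ≠ 0 → j = i ∨ h j < h i) : P.det ≠ 0 := by
  have hbt : Matrix.BlockTriangular Pᵀ h := by
    intro i j hij
    by_contra hne
    rcases htri j i hne with rfl | hlt
    · exact lt_irrefl _ hij
    · exact absurd hij (not_lt.mpr hlt.le)
  rw [← Matrix.det_transpose, hbt.det]
  apply Finset.prod_ne_zero_iff.mpr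
  intro a _
  have : (Pᵀ.toSquareBlock h a) = Matrix.diagonal (fun i : {x // h x = a} => P (i : n) (i : n)) := by
    ext ⟨i, hi⟩ ⟨j, hj⟩
    by_cases hij : i = j
    · subst hij; simp [Matrix.toSquareBlock_def]
    · have : P j i = 0 := by
        by_contra hc
        rcases htri j i hc with h1 | h2
        · exact hij h1
        · rw [hi, hj] at h2; exact lt_irrefl _ h2
      have hij' : (⟨i, hi⟩ : {x // h x = a}) ≠ ⟨j, hj⟩ := fun hc => hij (by simpa using hc)
      simp [Matrix.toSquareBlock_def, Matrix.diagonal, hij', this, Matrix.transpose_apply,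
        Subtype.ext_iff, hij]
  rw [this, Matrix.det_diagonal]
  exact Finset.prod_ne_zero_iff.mpr fun i _ => hdiag i

lemma aux_exists_perturb {n : Type*} [Fintype n] [DecidableEq n]
    (M₀ M₁ : Matrix n n ℝ) (h : M₀.det ≠ 0) :
    ∃ ε : ℝ, ε ≠ 0 ∧ (M₀ + ε • M₁).det ≠ 0 := by
  classical
  set Mp : Matrix n n (Polynomial ℝ) :=
    M₀.map Polynomial.C + (Polynomial.X : Polynomial ℝ) • M₁.map Polynomial.C with hMp
  set P : Polynomial ℝ := Mp.det with hP
  have hev : ∀ ε : ℝ, Polynomial.eval ε P = (M₀ + ε • M₁).det := by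
    intro ε
    have h1 := RingHom.map_det (Polynomial.evalRingHom ε) Mp
    have h2 : (Polynomial.evalRingHom ε).mapMatrix Mp = M₀ + ε • M₁ := by
      ext i j
      simp only [RingHom.mapMatrix_apply, Matrix.map_apply, hMp, Matrix.add_apply,
        Matrix.smul_apply, smul_eq_mul, Polynomial.coe_evalRingHom, Polynomial.eval_add,
        Polynomial.eval_mul, Polynomial.eval_C, Polynomial.eval_X]
    rw [hP]
    calc Polynomial.eval ε Mp.det = ((Polynomial.evalRingHom ε).mapMatrix Mp).det := h1
    _ = _ := by rw [h2]
  have hP0 : P ≠ 0 := by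
    intro h0
    apply h
    have := hev 0
    rw [h0] at this
    simpa using this.symm
  have hfin : Set.Finite ({(0:ℝ)} ∪ {x | P.IsRoot x}) :=
    (Set.finite_singleton 0).union (Polynomial.finite_setOf_isRoot hP0)
  obtain ⟨ε, hε⟩ := hfin.infinite_compl.nonempty
  simp only [Set.mem_compl_iff, Set.mem_union, Set.mem_singleton_iff, Set.mem_setOf_eq,
    not_or] at hε
  exact ⟨ε, hε.1, by rw [← hev]; exact hε.2⟩

lemma aux_exists_parent {N : ℕ} (T : SimpleGraph (Fin (N + 1))) (hconn : T.Connected)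
    (v : Fin N) : ∃ x, T.Adj v.succ x ∧ T.dist x 0 < T.dist v.succ 0 := by
  obtain ⟨p, hp⟩ := hconn.exists_walk_length_eq_dist v.succ 0
  have hne : (v.succ : Fin (N + 1)) ≠ 0 := Fin.succ_ne_zero v
  cases p with
  | cons h q =>
    refine ⟨_, h, ?_⟩
    have h1 := SimpleGraph.dist_le q
    simp only [SimpleGraph.Walk.length_cons] at hp
    omega

lemma aux_getElem_eq {α : Type*} (l : List α) {i j : ℕ} (hj : j < l.length) (h : i = j) :
    l[i]'(h ▸ hj) = l[j]'hj := by subst h; rfl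

lemma aux_getElem_eq2 {α : Type*} {l l' : List α} {i i' : ℕ} (hl : l = l') (hi : i = i')
    (h : i' < l'.length) : l[i]'(by subst hl; subst hi; exact h) = l'[i']'h := by
  subst hl; subst hi; rfl

lemma aux_head_mem {α : Type*} {l : List α} {a : α} (h : l.head? = some a) : a ∈ l := by
  cases l with
  | nil => simp at h
  | cons x xs => simp at h; subst h; exact List.mem_cons_self

/-- Adjacency of the subgraph of `T` induced on the non-root vertices
`{1, …, N}`, identified with `Fin N` via `Fin.succ`. -/
def InducedAdj {N : ℕ} (T : SimpleGraph (Fin (N + 1))) (u v : Fin N) : Prop :=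
  T.Adj u.succ v.succ

theorem stmt10 {N : ℕ} (T : SimpleGraph (Fin (N + 1))) (hT : T.IsTree)
    (hleaf : ∃! v, T.Adj 0 v)
    (hd tl : Fin N → Fin (N + 1))
    (hadj : ∀ e, T.Adj (hd e) (tl e))
    (hinj : Function.Injective fun e => s(hd e, tl e))
    (hsurj : ∀ ed ∈ T.edgeSet, ∃ e, s(hd e, tl e) = ed)
    (A : Matrix (Fin N) (Fin N) ℝ)
    (hA : ∀ e v, A e v = if v.succ = hd e then 1 else if v.succ = tl e then -1 else 0)
    (C M O : Finset (Fin N))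
    (hCM : Disjoint C M) (hCO : Disjoint C O) (hMO : Disjoint M O)
    (hcover : C ∪ M ∪ O = Finset.univ)
    (hcard : M.card = O.card)
    (paths : Fin N → List (Fin N))
    (hpaths : ∀ o ∈ O, (paths o).Nodup ∧ (paths o).Chain' (InducedAdj T) ∧
      (paths o).head? = some o ∧ ∃ mEnd ∈ M, (paths o).getLast? = some mEnd)
    (hdisj : ∀ o ∈ O, ∀ o' ∈ O, o ≠ o' → ∀ v ∈ paths o, v ∉ paths o') :
    ∃ d : Fin N → ℝ, (∀ n, d n ≠ 0) ∧
      ((A.submatrix id (fun x : ↥(C ∪ M) => (x : Fin N)))ᵀ * Matrix.diagonal d *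
        A.submatrix id (fun x : ↥(C ∪ O) => (x : Fin N))).rank = (C ∪ M).card := by
  classical
  have hconn : T.Connected := hT.isConnected
  -- parent function
  choose par hparAdj hparDist using aux_exists_parent T hconn
  -- edge index function
  have heidx0 : ∀ a b : Fin (N + 1), T.Adj a b → ∃ e, s(hd e, tl e) = s(a, b) := by
    intro a b h
    exact hsurj s(a, b) (T.mem_edgeSet.mpr h)
  choose eIdx heIdx using heidx0
  -- A column structure
  have hAne : ∀ (e : Fin N) (a b : Fin (N + 1)), s(hd e, tl e) = s(a, b) →
      ∀ v : Fin N, A e v ≠ 0 → v.succ = a ∨ v.succ = b := by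
    intro e a b hs v hv
    rw [hA] at hv
    rcases Sym2.eq_iff.mp hs with ⟨h1, h2⟩ | ⟨h1, h2⟩
    · by_cases hv1 : v.succ = hd e
      · exact Or.inl (hv1.trans h1)
      · by_cases hv2 : v.succ = tl e
        · exact Or.inr (hv2.trans h2)
        · simp [hv1, hv2] at hv
    · by_cases hv1 : v.succ = hd e
      · exact Or.inr (hv1.trans h1)
      · by_cases hv2 : v.succ = tl e
        · exact Or.inl (hv2.trans h2)
        · simp [hv1, hv2] at hv
  have hAnz : ∀ (e : Fin N) (a b : Fin (N + 1)), s(hd e, tl e) = s(a, b) →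
      ∀ v : Fin N, v.succ = a ∨ v.succ = b → A e v ≠ 0 := by
    intro e a b hs v hv
    have hne : hd e ≠ tl e := (hadj e).ne
    rw [hA]
    have hv' : v.succ = hd e ∨ v.succ = tl e := by
      rcases Sym2.eq_iff.mp hs with ⟨h1, h2⟩ | ⟨h1, h2⟩
      · rcases hv with h | h
        · exact Or.inl (h.trans h1.symm)
        · exact Or.inr (h.trans h2.symm)
      · rcases hv with h | h
        · exact Or.inr (h.trans h2.symm)
        · exact Or.inl (h.trans h1.symm)
    rcases hv' with h | h
    · simp [h]
    · by_cases h2 : v.succ = hd e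
      · simp [h2]
      · simp [h, h2, Ne.symm hne]
  -- truncated paths
  set Q : Fin N → List (Fin N) :=
    fun o => (paths o).take ((paths o).findIdx (fun v => decide (v ∈ M)) + 1) with hQdef
  have hQsub : ∀ o, ∀ v ∈ Q o, v ∈ paths o := by
    intro o v hv
    exact List.take_subset _ _ hv
  have hfind : ∀ o ∈ O, (paths o).findIdx (fun v => decide (v ∈ M)) < (paths o).length := by
    intro o ho
    obtain ⟨-, -, -, mEnd, hmM, hml⟩ := hpaths o ho
    apply List.findIdx_lt_length_of_exists
    refine ⟨mEnd, ?_, by simp [hmM]⟩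
    have : (paths o) ≠ [] := by
      intro h; rw [h] at hml; simp at hml
    rw [List.getLast?_eq_getLast this] at hml
    rw [← Option.some_inj.mp hml]
    exact List.getLast_mem this
  have hQlen : ∀ o ∈ O, (Q o).length = (paths o).findIdx (fun v => decide (v ∈ M)) + 1 := by
    intro o ho
    simp only [hQdef, List.length_take]
    have := hfind o ho
    omega
  have hQlenpos : ∀ o ∈ O, 0 < (Q o).length := by
    intro o ho; rw [hQlen o ho]; omega
  have hQget : ∀ (o : Fin N) (i : ℕ) (h : i < (Q o).length) (h2 : i < (paths o).length),
      (Q o)[i]'h = (paths o)[i]'h2 := by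
    intro o i h h2
    simp only [hQdef]
    exact List.getElem_take
  have hQnd : ∀ o ∈ O, (Q o).Nodup := by
    intro o ho
    exact ((paths o).take_sublist _).nodup (hpaths o ho).1
  have hQch : ∀ o ∈ O, (Q o).Chain' (InducedAdj T) := by
    intro o ho
    exact (hpaths o ho).2.1.prefix ((paths o).take_prefix _)
  have hplen : ∀ o ∈ O, ∀ i, i < (Q o).length → i < (paths o).length := by
    intro o ho i h
    have h1 := hQlen o ho
    have h2 := hfind o ho
    omega
  have hQ0 : ∀ o ∈ O, ∀ (h : 0 < (Q o).length), (Q o)[0]'h = o := by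
    intro o ho h
    rw [hQget o 0 h (hplen o ho 0 h)]
    obtain ⟨-, -, hh, -⟩ := hpaths o ho
    have h0 : (paths o)[0]? = some o := by rw [← List.head?_eq_getElem?]; exact hh
    rw [List.getElem?_eq_getElem (hplen o ho 0 h)] at h0
    exact Option.some_inj.mp h0
  have hQlast : ∀ o ∈ O, ∀ (h : (Q o).length - 1 < (Q o).length),
      (Q o)[(Q o).length - 1]'h ∈ M := by
    intro o ho h
    have hl := hQlen o ho
    have hf := hfind o ho
    rw [hQget o _ h (hplen o ho _ h)]
    have heq : (Q o).length - 1 = (paths o).findIdx (fun v => decide (v ∈ M)) := by omega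
    have hp : (fun v => decide (v ∈ M)) ((paths o)[(paths o).findIdx (fun v => decide (v ∈ M))]'hf) = true :=
      List.findIdx_getElem (w := hf)
    simp only [decide_eq_true_eq] at hp
    convert hp using 2
  have hQmid : ∀ o ∈ O, ∀ i (h : i < (Q o).length - 1), (Q o)[i]'(by omega) ∉ M := by
    intro o ho i h
    have hl := hQlen o ho
    rw [hQget o i (by omega) (hplen o ho i (by omega))]
    intro hmem
    have hlt : i < (paths o).findIdx (fun v => decide (v ∈ M)) := by omega
    have := List.not_of_lt_findIdx (p := fun v => decide (v ∈ M)) (xs := paths o) hlt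
    simp only [decide_eq_false_iff_not] at this
    exact this hmem
  -- global path structure
  have hoOf0 : ∀ v, (∃ o, o ∈ O ∧ v ∈ Q o) → ∃ o, o ∈ O ∧ v ∈ Q o := fun v h => h
  choose oOf hoO hoMem using hoOf0
  set inU : Fin N → Prop := fun v => ∃ o, o ∈ O ∧ v ∈ Q o with hinUdef
  have u1 : ∀ o o', o ∈ O → o' ∈ O → ∀ v, v ∈ Q o → v ∈ Q o' → o = o' := by
    intro o o' ho ho' v hv hv'
    by_contra hne
    exact hdisj o ho o' ho' hne v (hQsub o v hv) (hQsub o' v hv')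
  have hidxlt : ∀ (o v : Fin N), v ∈ Q o → (Q o).idxOf v < (Q o).length :=
    fun o v hv => List.idxOf_lt_length_iff.mpr hv
  have hidxget : ∀ (o v : Fin N) (hv : v ∈ Q o), (Q o)[(Q o).idxOf v]'(hidxlt o v hv) = v :=
    fun o v hv => List.getElem_idxOf _
  have hgetmem : ∀ (o : Fin N) (i : ℕ) (h : i < (Q o).length), (Q o)[i]'h ∈ Q o :=
    fun o i h => List.getElem_mem h
  have hidxof : ∀ o ∈ O, ∀ (i : ℕ) (h : i < (Q o).length), (Q o).idxOf ((Q o)[i]'h) = i := by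
    intro o ho i h
    simp [hQnd o ho]
  have hoOfeq : ∀ (v : Fin N) (h : ∃ o, o ∈ O ∧ v ∈ Q o) (o : Fin N), o ∈ O → v ∈ Q o →
      oOf v h = o := fun v h o ho hv => u1 _ _ (hoO v h) ho v (hoMem v h) hv
  have hposO : ∀ o ∈ O, ∀ (i : ℕ) (h : i < (Q o).length), (Q o)[i]'h ∈ O → i = 0 := by
    intro o ho i h hiO
    have hvQ : (Q o)[i]'h ∈ Q o := hgetmem o i h
    have hvv : (Q o)[i]'h ∈ paths ((Q o)[i]'h) := by
      obtain ⟨-, -, hh, -⟩ := hpaths _ hiO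
      exact aux_head_mem hh
    by_cases hov : o = (Q o)[i]'h
    · have h2 : (Q o)[0]'(hQlenpos o ho) = o := hQ0 o ho _
      have : (Q o)[i]'h = (Q o)[0]'(hQlenpos o ho) := by rw [h2, ← hov]
      exact ((hQnd o ho).getElem_inj_iff).mp this
    · exact absurd (hQsub o _ hvQ)
        (hdisj _ hiO o ho (fun hc => hov hc.symm) _ hvv)
  have hposM : ∀ o ∈ O, ∀ (i : ℕ) (h : i < (Q o).length), (Q o)[i]'h ∈ M → i = (Q o).length - 1 := by
    intro o ho i h hiM
    by_contra hne
    exact hQmid o ho i (by omega) hiM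
  have hMU : ∀ m ∈ M, ∃ o, o ∈ O ∧ m ∈ Q o := by
    have hsurj2 := Finset.surj_on_of_inj_on_of_card_le
      (s := O) (t := M)
      (fun o ho => (Q o)[(Q o).length - 1]'(by have := hQlenpos o ho; omega))
      (fun o ho => hQlast o ho _)
      (by
        intro o₁ o₂ h₁ h₂ he
        refine u1 o₁ o₂ h₁ h₂ ((Q o₁)[(Q o₁).length - 1]'(by have := hQlenpos o₁ h₁; omega))
          (hgetmem _ _ _) ?_
        rw [he]
        exact hgetmem _ _ _)
      (le_of_eq hcard)
    intro m hm
    obtain ⟨o, ho, hmo⟩ := hsurj2 m hm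
    exact ⟨o, ho, by rw [hmo]; exact hgetmem _ _ _⟩
  have hlenN : ∀ o ∈ O, (Q o).length ≤ N := by
    intro o ho
    have := (hQnd o ho).length_le_card
    simpa using this
  have hdp : ∀ v : Fin N, 0 < T.dist v.succ 0 :=
    fun v => hconn.pos_dist_of_ne (Fin.succ_ne_zero v)
  have hQadj : ∀ o ∈ O, ∀ (i : ℕ) (h : i + 1 < (Q o).length),
      T.Adj ((Q o)[i]'(by omega)).succ ((Q o)[i+1]'h).succ := by
    intro o ho i h
    have := (List.isChain_iff_getElem.mp (hQch o ho)) i (by omega)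
    exact this
  have hQadj2 : ∀ o ∈ O, ∀ (i j : ℕ) (hi : i < (Q o).length) (hj : j < (Q o).length),
      i + 1 = j → T.Adj ((Q o)[i]'hi).succ ((Q o)[j]'hj).succ := by
    intro o ho i j hi hj he
    subst he
    exact (List.isChain_iff_getElem.mp (hQch o ho)) i (by omega)
  -- heights
  set hX : Fin N → ℕ :=
    fun v => if h : ∃ o, o ∈ O ∧ v ∈ Q o then (Q (oOf v h)).idxOf v
      else N + T.dist v.succ 0 with hhX
  set hY : Fin N → ℕ :=
    fun v => if h : ∃ o, o ∈ O ∧ v ∈ Q o then ((Q (oOf v h)).length - 1) - (Q (oOf v h)).idxOf v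
      else N + T.dist v.succ 0 with hhY
  -- the edge selector for the C ∪ M side
  have hfX0 : ∀ w : Fin N, w ∈ C ∪ M → ∃ e : Fin N,
      (∀ h : ∃ o, o ∈ O ∧ w ∈ Q o, s(hd e, tl e) =
        s(((Q (oOf w h)).getD ((Q (oOf w h)).idxOf w - 1) w).succ, w.succ)) ∧
      (¬ (∃ o, o ∈ O ∧ w ∈ Q o) → s(hd e, tl e) = s(w.succ, par w)) := by
    intro w hw
    by_cases h : ∃ o, o ∈ O ∧ w ∈ Q o
    · have ho : oOf w h ∈ O := hoO w h
      have hwQ : w ∈ Q (oOf w h) := hoMem w h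
      have hklt : (Q (oOf w h)).idxOf w < (Q (oOf w h)).length := hidxlt _ w hwQ
      have hk0 : (Q (oOf w h)).idxOf w ≠ 0 := by
        intro h0
        have h1 : (Q (oOf w h))[(Q (oOf w h)).idxOf w]'hklt = w := hidxget _ w hwQ
        have h2 : (Q (oOf w h))[0]'(hQlenpos _ ho) = oOf w h := hQ0 _ ho _
        have h3 : w = oOf w h :=
          (h1.symm.trans (aux_getElem_eq _ (hQlenpos _ ho) h0)).trans h2
        have : w ∈ O := h3 ▸ ho
        rcases Finset.mem_union.mp hw with hc | hc
        · exact (Finset.disjoint_left.mp hCO hc) this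
        · exact (Finset.disjoint_left.mp hMO hc) this
      have hadj2 : T.Adj ((Q (oOf w h))[(Q (oOf w h)).idxOf w - 1]'(by omega)).succ w.succ := by
        have h5 := hQadj2 _ ho ((Q (oOf w h)).idxOf w - 1) ((Q (oOf w h)).idxOf w)
          (by omega) hklt (by omega)
        have h6 : (Q (oOf w h))[(Q (oOf w h)).idxOf w]'hklt = w := hidxget _ w hwQ
        rw [h6] at h5
        exact h5
      refine ⟨eIdx _ _ hadj2, fun h' => ?_, fun h' => absurd h h'⟩
      rw [List.getD_eq_getElem _ _ (by omega)]
      exact heIdx _ _ hadj2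
    · exact ⟨eIdx _ _ (hparAdj w), fun h' => absurd h' h, fun _ => heIdx _ _ (hparAdj w)⟩
  choose fX0 hfXU hfXnU using hfX0
  -- the edge selector for the C ∪ O side
  have hfY0 : ∀ w : Fin N, w ∈ C ∪ O → ∃ e : Fin N,
      (∀ h : ∃ o, o ∈ O ∧ w ∈ Q o, s(hd e, tl e) =
        s(w.succ, ((Q (oOf w h)).getD ((Q (oOf w h)).idxOf w + 1) w).succ)) ∧
      (¬ (∃ o, o ∈ O ∧ w ∈ Q o) → s(hd e, tl e) = s(w.succ, par w)) := by
    intro w hw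
    by_cases h : ∃ o, o ∈ O ∧ w ∈ Q o
    · have ho : oOf w h ∈ O := hoO w h
      have hwQ : w ∈ Q (oOf w h) := hoMem w h
      have hklt : (Q (oOf w h)).idxOf w < (Q (oOf w h)).length := hidxlt _ w hwQ
      have hkl : (Q (oOf w h)).idxOf w ≠ (Q (oOf w h)).length - 1 := by
        intro h0
        have h1 : (Q (oOf w h))[(Q (oOf w h)).idxOf w]'hklt = w := hidxget _ w hwQ
        have hb : (Q (oOf w h)).length - 1 < (Q (oOf w h)).length := by omega
        have h2 : (Q (oOf w h))[(Q (oOf w h)).length - 1]'hb ∈ M := hQlast _ ho _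
        have h4 : (Q (oOf w h))[(Q (oOf w h)).idxOf w]'hklt =
            (Q (oOf w h))[(Q (oOf w h)).length - 1]'hb := aux_getElem_eq _ hb h0
        rw [h1] at h4
        rw [← h4] at h2
        rcases Finset.mem_union.mp hw with hc | hc
        · exact (Finset.disjoint_left.mp hCM hc) h2
        · exact (Finset.disjoint_left.mp (hMO.symm) hc) h2
      have hadj2 : T.Adj w.succ ((Q (oOf w h))[(Q (oOf w h)).idxOf w + 1]'(by omega)).succ := by
        have h5 := hQadj2 _ ho ((Q (oOf w h)).idxOf w) ((Q (oOf w h)).idxOf w + 1)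
          hklt (by omega) rfl
        have h6 : (Q (oOf w h))[(Q (oOf w h)).idxOf w]'hklt = w := hidxget _ w hwQ
        rw [h6] at h5
        exact h5
      refine ⟨eIdx _ _ hadj2, fun h' => ?_, fun h' => absurd h h'⟩
      rw [List.getD_eq_getElem _ _ (by omega)]
      exact heIdx _ _ hadj2
    · exact ⟨eIdx _ _ (hparAdj w), fun h' => absurd h' h, fun _ => heIdx _ _ (hparAdj w)⟩
  choose fY0 hfYU hfYnU using hfY0
  -- standalone index bounds
  have hk0X : ∀ (w : Fin N), w ∈ C ∪ M → ∀ (h : ∃ o, o ∈ O ∧ w ∈ Q o),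
      (Q (oOf w h)).idxOf w ≠ 0 := by
    intro w hw h h0
    have ho : oOf w h ∈ O := hoO w h
    have hwQ : w ∈ Q (oOf w h) := hoMem w h
    have hklt := hidxlt _ w hwQ
    have h1 : (Q (oOf w h))[(Q (oOf w h)).idxOf w]'hklt = w := hidxget _ w hwQ
    have h2 : (Q (oOf w h))[0]'(hQlenpos _ ho) = oOf w h := hQ0 _ ho _
    have h3 : w = oOf w h := (h1.symm.trans (aux_getElem_eq _ (hQlenpos _ ho) h0)).trans h2
    have hwO : w ∈ O := h3 ▸ ho
    rcases Finset.mem_union.mp hw with hc | hc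
    · exact (Finset.disjoint_left.mp hCO hc) hwO
    · exact (Finset.disjoint_left.mp hMO hc) hwO
  have hklY : ∀ (w : Fin N), w ∈ C ∪ O → ∀ (h : ∃ o, o ∈ O ∧ w ∈ Q o),
      (Q (oOf w h)).idxOf w ≠ (Q (oOf w h)).length - 1 := by
    intro w hw h h0
    have ho : oOf w h ∈ O := hoO w h
    have hwQ : w ∈ Q (oOf w h) := hoMem w h
    have hklt := hidxlt _ w hwQ
    have h1 : (Q (oOf w h))[(Q (oOf w h)).idxOf w]'hklt = w := hidxget _ w hwQ
    have hb : (Q (oOf w h)).length - 1 < (Q (oOf w h)).length := by omega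
    have h2 : (Q (oOf w h))[(Q (oOf w h)).length - 1]'hb ∈ M := hQlast _ ho _
    have h4 : w = (Q (oOf w h))[(Q (oOf w h)).length - 1]'hb :=
      h1.symm.trans (aux_getElem_eq _ hb h0)
    rw [← h4] at h2
    rcases Finset.mem_union.mp hw with hc | hc
    · exact (Finset.disjoint_left.mp hCM hc) h2
    · exact (Finset.disjoint_left.mp hMO.symm hc) h2
  -- subtype-level edge maps
  set fX : {x // x ∈ C ∪ M} → Fin N := fun w => fX0 ↑w w.2 with hfXdef
  set fY : {x // x ∈ C ∪ O} → Fin N := fun w => fY0 ↑w w.2 with hfYdef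
  -- triangularity for the C ∪ M side
  have htriX : ∀ w i : {x // x ∈ C ∪ M}, A (fX w) ↑i ≠ 0 → i = w ∨ hX ↑i < hX ↑w := by
    intro w i hne
    by_cases h : ∃ o, o ∈ O ∧ (w : Fin N) ∈ Q o
    · have ho : oOf ↑w h ∈ O := hoO _ h
      have hwQ : (w : Fin N) ∈ Q (oOf ↑w h) := hoMem _ h
      have hklt := hidxlt _ _ hwQ
      have hk0 := hk0X ↑w w.2 h
      have hb : (Q (oOf ↑w h)).idxOf ↑w - 1 < (Q (oOf ↑w h)).length := by omega
      have hsym := hfXU ↑w w.2 h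
      rw [List.getD_eq_getElem _ _ hb] at hsym
      rcases hAne _ _ _ hsym ↑i hne with h1 | h2
      · right
        have hieq : (i : Fin N) =
            (Q (oOf ↑w h))[(Q (oOf ↑w h)).idxOf ↑w - 1]'hb := Fin.succ_injective _ h1
        have hiU : ∃ o, o ∈ O ∧ (i : Fin N) ∈ Q o :=
          ⟨oOf ↑w h, ho, by rw [hieq]; exact hgetmem _ _ _⟩
        have ho2 : oOf ↑i hiU = oOf ↑w h :=
          hoOfeq _ hiU _ ho (by rw [hieq]; exact hgetmem _ _ _)
        have hidx2 : (Q (oOf ↑w h)).idxOf ↑i = (Q (oOf ↑w h)).idxOf ↑w - 1 := by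
          rw [hieq]; exact hidxof _ ho _ _
        simp only [hhX]
        rw [dif_pos hiU, dif_pos h, ho2, hidx2]
        omega
      · left; exact Subtype.ext (Fin.succ_injective _ h2)
    · have hsym := hfXnU ↑w w.2 h
      rcases hAne _ _ _ hsym ↑i hne with h1 | h2
      · left; exact Subtype.ext (Fin.succ_injective _ h1)
      · right
        by_cases hiU : ∃ o, o ∈ O ∧ (i : Fin N) ∈ Q o
        · simp only [hhX]
          rw [dif_pos hiU, dif_neg h]
          have h3 : (Q (oOf ↑i hiU)).idxOf ↑i < (Q (oOf ↑i hiU)).length :=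
            hidxlt _ _ (hoMem _ hiU)
          have h4 := hlenN _ (hoO _ hiU)
          have h5 := hdp (↑w : Fin N)
          omega
        · simp only [hhX]
          rw [dif_neg hiU, dif_neg h]
          have h6 : T.dist ((↑i : Fin N)).succ 0 < T.dist ((↑w : Fin N)).succ 0 := by
            rw [h2]; exact hparDist ↑w
          omega
  -- triangularity for the C ∪ O side
  have htriY : ∀ w i : {x // x ∈ C ∪ O}, A (fY w) ↑i ≠ 0 → i = w ∨ hY ↑i < hY ↑w := by
    intro w i hne
    by_cases h : ∃ o, o ∈ O ∧ (w : Fin N) ∈ Q o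
    · have ho : oOf ↑w h ∈ O := hoO _ h
      have hwQ : (w : Fin N) ∈ Q (oOf ↑w h) := hoMem _ h
      have hklt := hidxlt _ _ hwQ
      have hkl := hklY ↑w w.2 h
      have hb : (Q (oOf ↑w h)).idxOf ↑w + 1 < (Q (oOf ↑w h)).length := by omega
      have hsym := hfYU ↑w w.2 h
      rw [List.getD_eq_getElem _ _ hb] at hsym
      rcases hAne _ _ _ hsym ↑i hne with h1 | h2
      · left; exact Subtype.ext (Fin.succ_injective _ h1)
      · right
        have hieq : (i : Fin N) =
            (Q (oOf ↑w h))[(Q (oOf ↑w h)).idxOf ↑w + 1]'hb := Fin.succ_injective _ h2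
        have hiU : ∃ o, o ∈ O ∧ (i : Fin N) ∈ Q o :=
          ⟨oOf ↑w h, ho, by rw [hieq]; exact hgetmem _ _ _⟩
        have ho2 : oOf ↑i hiU = oOf ↑w h :=
          hoOfeq _ hiU _ ho (by rw [hieq]; exact hgetmem _ _ _)
        have hidx2 : (Q (oOf ↑w h)).idxOf ↑i = (Q (oOf ↑w h)).idxOf ↑w + 1 := by
          rw [hieq]; exact hidxof _ ho _ _
        simp only [hhY]
        rw [dif_pos hiU, dif_pos h, ho2, hidx2]
        omega
    · have hsym := hfYnU ↑w w.2 h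
      rcases hAne _ _ _ hsym ↑i hne with h1 | h2
      · left; exact Subtype.ext (Fin.succ_injective _ h1)
      · right
        by_cases hiU : ∃ o, o ∈ O ∧ (i : Fin N) ∈ Q o
        · simp only [hhY]
          rw [dif_pos hiU, dif_neg h]
          have h3 : (Q (oOf ↑i hiU)).idxOf ↑i < (Q (oOf ↑i hiU)).length :=
            hidxlt _ _ (hoMem _ hiU)
          have h4 := hlenN _ (hoO _ hiU)
          have h5 := hdp (↑w : Fin N)
          omega
        · simp only [hhY]
          rw [dif_neg hiU, dif_neg h]
          have h6 : T.dist ((↑i : Fin N)).succ 0 < T.dist ((↑w : Fin N)).succ 0 := by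
            rw [h2]; exact hparDist ↑w
          omega
  -- nonzero diagonals
  have hdiagX : ∀ w : {x // x ∈ C ∪ M}, A (fX w) ↑w ≠ 0 := by
    intro w
    by_cases h : ∃ o, o ∈ O ∧ (w : Fin N) ∈ Q o
    · exact hAnz _ _ _ (hfXU ↑w w.2 h) ↑w (Or.inr rfl)
    · exact hAnz _ _ _ (hfXnU ↑w w.2 h) ↑w (Or.inl rfl)
  have hdiagY : ∀ w : {x // x ∈ C ∪ O}, A (fY w) ↑w ≠ 0 := by
    intro w
    by_cases h : ∃ o, o ∈ O ∧ (w : Fin N) ∈ Q o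
    · exact hAnz _ _ _ (hfYU ↑w w.2 h) ↑w (Or.inl rfl)
    · exact hAnz _ _ _ (hfYnU ↑w w.2 h) ↑w (Or.inl rfl)
  -- injectivity of fX
  have hfXinj : Function.Injective fX := by
    intro w w' he
    have hs : s(hd (fX w), tl (fX w)) = s(hd (fX w'), tl (fX w')) := by rw [he]
    by_cases h : ∃ o, o ∈ O ∧ (w : Fin N) ∈ Q o <;>
      by_cases h' : ∃ o, o ∈ O ∧ (w' : Fin N) ∈ Q o
    · -- both on paths
      have ho : oOf ↑w h ∈ O := hoO _ h
      have ho' : oOf ↑w' h' ∈ O := hoO _ h'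
      have hwQ := hoMem (↑w : Fin N) h
      have hwQ' := hoMem (↑w' : Fin N) h'
      have hklt := hidxlt _ _ hwQ
      have hklt' := hidxlt _ _ hwQ'
      have hk0 := hk0X ↑w w.2 h
      have hk0' := hk0X ↑w' w'.2 h'
      have hb : (Q (oOf ↑w h)).idxOf ↑w - 1 < (Q (oOf ↑w h)).length := by omega
      have hb' : (Q (oOf ↑w' h')).idxOf ↑w' - 1 < (Q (oOf ↑w' h')).length := by omega
      have h1 := hfXU ↑w w.2 h
      have h2 := hfXU ↑w' w'.2 h'
      rw [List.getD_eq_getElem _ _ hb] at h1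
      rw [List.getD_eq_getElem _ _ hb'] at h2
      have hs2 := (h1.symm.trans hs).trans h2
      rcases Sym2.eq_iff.mp hs2 with ⟨ha, hb2⟩ | ⟨ha, hb2⟩
      · exact Subtype.ext (Fin.succ_injective _ hb2)
      · exfalso
        have hw'eq : (w' : Fin N) = (Q (oOf ↑w h))[(Q (oOf ↑w h)).idxOf ↑w - 1]'hb :=
          (Fin.succ_injective _ ha).symm
        have hweq : (w : Fin N) = (Q (oOf ↑w' h'))[(Q (oOf ↑w' h')).idxOf ↑w' - 1]'hb' :=
          Fin.succ_injective _ hb2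
        have hov : oOf ↑w h = oOf ↑w' h' :=
          u1 _ _ ho ho' ↑w' (by rw [hw'eq]; exact hgetmem _ _ _) hwQ'
        have hQeq : Q (oOf ↑w h) = Q (oOf ↑w' h') := by rw [hov]
        -- index of w' in Q (oOf w h) two ways
        have e1 : (Q (oOf ↑w h)).idxOf ↑w' = (Q (oOf ↑w h)).idxOf ↑w - 1 := by
          rw [hw'eq]; exact hidxof _ ho _ _
        have e2 : (Q (oOf ↑w h)).idxOf ↑w' = (Q (oOf ↑w' h')).idxOf ↑w' := by
          rw [hQeq]
        -- index of w in Q (oOf w' h') two ways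
        have e3 : (Q (oOf ↑w' h')).idxOf ↑w = (Q (oOf ↑w' h')).idxOf ↑w' - 1 := by
          rw [hweq]; exact hidxof _ ho' _ _
        have e4 : (Q (oOf ↑w' h')).idxOf ↑w = (Q (oOf ↑w h)).idxOf ↑w := by
          rw [hQeq]
        omega
    · -- w on a path, w' not
      have hk0 := hk0X ↑w w.2 h
      have hklt := hidxlt _ _ (hoMem (↑w : Fin N) h)
      have hb : (Q (oOf ↑w h)).idxOf ↑w - 1 < (Q (oOf ↑w h)).length := by omega
      have h1 := hfXU ↑w w.2 h
      rw [List.getD_eq_getElem _ _ hb] at h1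
      have h2 := hfXnU ↑w' w'.2 h'
      have hs2 := (h1.symm.trans hs).trans h2
      rcases Sym2.eq_iff.mp hs2 with ⟨ha, hb2⟩ | ⟨ha, hb2⟩
      · exfalso
        apply h'
        refine ⟨oOf ↑w h, hoO _ h, ?_⟩
        have : (w' : Fin N) = (Q (oOf ↑w h))[(Q (oOf ↑w h)).idxOf ↑w - 1]'hb :=
          (Fin.succ_injective _ ha).symm
        rw [this]; exact hgetmem _ _ _
      · exact Subtype.ext (Fin.succ_injective _ hb2)
    · -- w not on a path, w' is
      have hk0' := hk0X ↑w' w'.2 h'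
      have hklt' := hidxlt _ _ (hoMem (↑w' : Fin N) h')
      have hb' : (Q (oOf ↑w' h')).idxOf ↑w' - 1 < (Q (oOf ↑w' h')).length := by omega
      have h1 := hfXnU ↑w w.2 h
      have h2 := hfXU ↑w' w'.2 h'
      rw [List.getD_eq_getElem _ _ hb'] at h2
      have hs2 := (h1.symm.trans hs).trans h2
      rcases Sym2.eq_iff.mp hs2 with ⟨ha, hb2⟩ | ⟨ha, hb2⟩
      · exfalso
        apply h
        refine ⟨oOf ↑w' h', hoO _ h', ?_⟩
        have : (w : Fin N) = (Q (oOf ↑w' h'))[(Q (oOf ↑w' h')).idxOf ↑w' - 1]'hb' :=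
          Fin.succ_injective _ ha
        rw [this]; exact hgetmem _ _ _
      · exact Subtype.ext (Fin.succ_injective _ ha)
    · -- neither on a path
      have h1 := hfXnU ↑w w.2 h
      have h2 := hfXnU ↑w' w'.2 h'
      have hs2 := (h1.symm.trans hs).trans h2
      rcases Sym2.eq_iff.mp hs2 with ⟨ha, hb2⟩ | ⟨ha, hb2⟩
      · exact Subtype.ext (Fin.succ_injective _ ha)
      · exfalso
        have d1 : T.dist ((↑w : Fin N)).succ 0 < T.dist ((↑w' : Fin N)).succ 0 := by
          rw [ha]; exact hparDist ↑w'
        have d2 : T.dist ((↑w' : Fin N)).succ 0 < T.dist ((↑w : Fin N)).succ 0 := by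
          rw [← hb2]; exact hparDist ↑w
        omega
  -- the pairing map σ
  have hσmem : ∀ w : {x // x ∈ C ∪ M},
      (if h : ∃ o, o ∈ O ∧ (w : Fin N) ∈ Q o then
        (Q (oOf ↑w h)).getD ((Q (oOf ↑w h)).idxOf ↑w - 1) ↑w else (↑w : Fin N)) ∈ C ∪ O := by
    intro w
    by_cases h : ∃ o, o ∈ O ∧ (w : Fin N) ∈ Q o
    · rw [dif_pos h]
      have ho : oOf ↑w h ∈ O := hoO _ h
      have hk0 := hk0X ↑w w.2 h
      have hklt := hidxlt _ _ (hoMem (↑w : Fin N) h)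
      have hb : (Q (oOf ↑w h)).idxOf ↑w - 1 < (Q (oOf ↑w h)).length := by omega
      rw [List.getD_eq_getElem _ _ hb]
      have hnm : (Q (oOf ↑w h))[(Q (oOf ↑w h)).idxOf ↑w - 1]'hb ∉ M :=
        hQmid _ ho _ (by omega)
      have hin : (Q (oOf ↑w h))[(Q (oOf ↑w h)).idxOf ↑w - 1]'hb ∈ C ∪ M ∪ O := by
        rw [hcover]; exact Finset.mem_univ _
      rcases Finset.mem_union.mp hin with h9 | h9
      · rcases Finset.mem_union.mp h9 with hc | hc
        · exact Finset.mem_union_left _ hc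
        · exact absurd hc hnm
      · exact Finset.mem_union_right _ h9
    · rw [dif_neg h]
      have hwm : (w : Fin N) ∉ M := fun hm => h (hMU _ hm)
      rcases Finset.mem_union.mp w.2 with hc | hc
      · exact Finset.mem_union_left _ hc
      · exact absurd hc hwm
  set σ : {x // x ∈ C ∪ M} → {x // x ∈ C ∪ O} := fun w =>
    ⟨if h : ∃ o, o ∈ O ∧ (w : Fin N) ∈ Q o then
        (Q (oOf ↑w h)).getD ((Q (oOf ↑w h)).idxOf ↑w - 1) ↑w else (↑w : Fin N),
      hσmem w⟩ with hσdef
  have hσvalU : ∀ (w : {x // x ∈ C ∪ M}) (h : ∃ o, o ∈ O ∧ (w : Fin N) ∈ Q o)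
      (hb : (Q (oOf ↑w h)).idxOf ↑w - 1 < (Q (oOf ↑w h)).length),
      (σ w : Fin N) = (Q (oOf ↑w h))[(Q (oOf ↑w h)).idxOf ↑w - 1]'hb := by
    intro w h hb
    simp only [hσdef]
    rw [dif_pos h, List.getD_eq_getElem _ _ hb]
  have hσvalnU : ∀ (w : {x // x ∈ C ∪ M}), ¬ (∃ o, o ∈ O ∧ (w : Fin N) ∈ Q o) →
      (σ w : Fin N) = ↑w := by
    intro w h
    simp only [hσdef]
    rw [dif_neg h]
  -- σ is injective
  have hσinj : Function.Injective σ := by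
    intro w w' he
    have he2 : (σ w : Fin N) = (σ w' : Fin N) := congrArg Subtype.val he
    by_cases h : ∃ o, o ∈ O ∧ (w : Fin N) ∈ Q o <;>
      by_cases h' : ∃ o, o ∈ O ∧ (w' : Fin N) ∈ Q o
    · have ho : oOf ↑w h ∈ O := hoO _ h
      have ho' : oOf ↑w' h' ∈ O := hoO _ h'
      have hk0 := hk0X ↑w w.2 h
      have hk0' := hk0X ↑w' w'.2 h'
      have hklt := hidxlt _ _ (hoMem (↑w : Fin N) h)
      have hklt' := hidxlt _ _ (hoMem (↑w' : Fin N) h')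
      have hb : (Q (oOf ↑w h)).idxOf ↑w - 1 < (Q (oOf ↑w h)).length := by omega
      have hb' : (Q (oOf ↑w' h')).idxOf ↑w' - 1 < (Q (oOf ↑w' h')).length := by omega
      rw [hσvalU w h hb, hσvalU w' h' hb'] at he2
      have hov : oOf ↑w h = oOf ↑w' h' :=
        u1 _ _ ho ho' _ (hgetmem _ _ _) (by rw [he2]; exact hgetmem _ _ _)
      have hQeq : Q (oOf ↑w h) = Q (oOf ↑w' h') := by rw [hov]
      have e1 : (Q (oOf ↑w h)).idxOf ((Q (oOf ↑w h))[(Q (oOf ↑w h)).idxOf ↑w - 1]'hb) =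
          (Q (oOf ↑w h)).idxOf ↑w - 1 := hidxof _ ho _ _
      have e2 : (Q (oOf ↑w' h')).idxOf ((Q (oOf ↑w' h'))[(Q (oOf ↑w' h')).idxOf ↑w' - 1]'hb') =
          (Q (oOf ↑w' h')).idxOf ↑w' - 1 := hidxof _ ho' _ _
      rw [he2] at e1
      have e3 : (Q (oOf ↑w h)).idxOf ((Q (oOf ↑w' h'))[(Q (oOf ↑w' h')).idxOf ↑w' - 1]'hb') =
          (Q (oOf ↑w' h')).idxOf ((Q (oOf ↑w' h'))[(Q (oOf ↑w' h')).idxOf ↑w' - 1]'hb') := by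
        rw [hQeq]
      have hkk : (Q (oOf ↑w h)).idxOf ↑w = (Q (oOf ↑w' h')).idxOf ↑w' := by omega
      -- conclude w = w'
      have g1 : (Q (oOf ↑w h))[(Q (oOf ↑w h)).idxOf ↑w]'hklt = (w : Fin N) :=
        hidxget _ _ (hoMem (↑w : Fin N) h)
      have g2 : (Q (oOf ↑w' h'))[(Q (oOf ↑w' h')).idxOf ↑w']'hklt' = (w' : Fin N) :=
        hidxget _ _ (hoMem (↑w' : Fin N) h')
      have g3 : (Q (oOf ↑w h))[(Q (oOf ↑w h)).idxOf ↑w]'hklt =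
          (Q (oOf ↑w' h'))[(Q (oOf ↑w' h')).idxOf ↑w']'hklt' :=
        aux_getElem_eq2 hQeq hkk hklt'
      exact Subtype.ext ((g1.symm.trans g3).trans g2)
    · exfalso
      have hk0 := hk0X ↑w w.2 h
      have hklt := hidxlt _ _ (hoMem (↑w : Fin N) h)
      have hb : (Q (oOf ↑w h)).idxOf ↑w - 1 < (Q (oOf ↑w h)).length := by omega
      rw [hσvalU w h hb, hσvalnU w' h'] at he2
      exact h' ⟨oOf ↑w h, hoO _ h, by rw [← he2]; exact hgetmem _ _ _⟩
    · exfalso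
      have hk0' := hk0X ↑w' w'.2 h'
      have hklt' := hidxlt _ _ (hoMem (↑w' : Fin N) h')
      have hb' : (Q (oOf ↑w' h')).idxOf ↑w' - 1 < (Q (oOf ↑w' h')).length := by omega
      rw [hσvalnU w h, hσvalU w' h' hb'] at he2
      exact h ⟨oOf ↑w' h', hoO _ h', by rw [he2]; exact hgetmem _ _ _⟩
    · rw [hσvalnU w h, hσvalnU w' h'] at he2
      exact Subtype.ext he2
  -- σ is an equivalence by cardinality
  have hcardeq : Fintype.card {x // x ∈ C ∪ M} = Fintype.card {x // x ∈ C ∪ O} := by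
    rw [Fintype.card_coe, Fintype.card_coe, Finset.card_union_of_disjoint hCM,
      Finset.card_union_of_disjoint hCO, hcard]
  have hσbij : Function.Bijective σ :=
    (Fintype.bijective_iff_injective_and_card σ).mpr ⟨hσinj, hcardeq⟩
  set σe : {x // x ∈ C ∪ M} ≃ {x // x ∈ C ∪ O} := Equiv.ofBijective σ hσbij with hσedef
  have hσeapp : ∀ w, σe w = σ w := fun w => rfl
  -- compatibility : fX w = fY (σ w)
  have hcompat : ∀ w, fX w = fY (σ w) := by
    intro w
    apply hinj
    show s(hd (fX w), tl (fX w)) = s(hd (fY (σ w)), tl (fY (σ w)))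
    by_cases h : ∃ o, o ∈ O ∧ (w : Fin N) ∈ Q o
    · have ho : oOf ↑w h ∈ O := hoO _ h
      have hk0 := hk0X ↑w w.2 h
      have hklt := hidxlt _ _ (hoMem (↑w : Fin N) h)
      have hb : (Q (oOf ↑w h)).idxOf ↑w - 1 < (Q (oOf ↑w h)).length := by omega
      have hval := hσvalU w h hb
      have hσU : ∃ o, o ∈ O ∧ (σ w : Fin N) ∈ Q o :=
        ⟨oOf ↑w h, ho, by rw [hval]; exact hgetmem _ _ _⟩
      have ho2 : oOf ↑(σ w) hσU = oOf ↑w h :=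
        hoOfeq _ hσU _ ho (by rw [hval]; exact hgetmem _ _ _)
      have hidx2 : (Q (oOf ↑w h)).idxOf ↑(σ w) = (Q (oOf ↑w h)).idxOf ↑w - 1 := by
        rw [hval]; exact hidxof _ ho _ _
      have h1 := hfXU ↑w w.2 h
      have h2 := hfYU ↑(σ w) (σ w).2 hσU
      rw [h1, h2, ho2, hidx2]
      rw [(by omega : (Q (oOf ↑w h)).idxOf ↑w - 1 + 1 = (Q (oOf ↑w h)).idxOf ↑w)]
      rw [List.getD_eq_getElem _ _ hb, List.getD_eq_getElem _ _ hklt]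
      rw [hidxget _ _ (hoMem (↑w : Fin N) h), hval]
    · have hval := hσvalnU w h
      have hσnU : ¬ ∃ o, o ∈ O ∧ (σ w : Fin N) ∈ Q o := by rw [hval]; exact h
      rw [hfXnU ↑w w.2 h, hfYnU ↑(σ w) (σ w).2 hσnU, hval]
  -- matrices
  set Xm : Matrix (Fin N) {x // x ∈ C ∪ M} ℝ :=
    A.submatrix id (fun x : ↥(C ∪ M) => (x : Fin N)) with hXmdef
  set Ym : Matrix (Fin N) {x // x ∈ C ∪ O} ℝ :=
    A.submatrix id (fun x : ↥(C ∪ O) => (x : Fin N)) with hYmdef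
  set SS : Finset (Fin N) := Finset.univ.image fX with hSSdef
  set d0 : Fin N → ℝ := fun e => if e ∈ SS then 1 else 0 with hd0def
  set d1 : Fin N → ℝ := fun e => if e ∈ SS then 0 else 1 with hd1def
  set Umat : Matrix {x // x ∈ C ∪ M} {x // x ∈ C ∪ M} ℝ :=
    Matrix.of (fun w i => A (fX w) ↑i) with hUmatdef
  set Vmat : Matrix {x // x ∈ C ∪ O} {x // x ∈ C ∪ O} ℝ :=
    Matrix.of (fun b j => A (fY b) ↑j) with hVmatdef
  have hdetU : Umat.det ≠ 0 := by
    apply aux_det_ne_zero_of_tri Umat (fun v => hX ↑v)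
    · intro i; exact hdiagX i
    · intro i j hne; exact htriX i j hne
  have hdetV : Vmat.det ≠ 0 := by
    apply aux_det_ne_zero_of_tri Vmat (fun v => hY ↑v)
    · intro i; exact hdiagY i
    · intro i j hne; exact htriY i j hne
  -- entry formula
  have hentry : ∀ (dv : Fin N → ℝ) (i : {x // x ∈ C ∪ M}) (j : {x // x ∈ C ∪ O}),
      (Xmᵀ * Matrix.diagonal dv * Ym) i j = ∑ e : Fin N, A e ↑i * (dv e * A e ↑j) := by
    intro dv i j
    rw [Matrix.mul_assoc, Matrix.mul_apply]
    apply Finset.sum_congr rfl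
    intro e _
    rw [Matrix.diagonal_mul]
    simp only [hXmdef, hYmdef, Matrix.transpose_apply, Matrix.submatrix_apply, id_eq]
  set M0 : Matrix {x // x ∈ C ∪ M} {x // x ∈ C ∪ M} ℝ :=
    (Xmᵀ * Matrix.diagonal d0 * Ym).submatrix id ⇑σe with hM0def
  set M1 : Matrix {x // x ∈ C ∪ M} {x // x ∈ C ∪ M} ℝ :=
    (Xmᵀ * Matrix.diagonal d1 * Ym).submatrix id ⇑σe with hM1def
  have hfXinj' : ∀ x ∈ Finset.univ, ∀ y ∈ Finset.univ, fX x = fX y → x = y :=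
    fun x _ y _ h => hfXinj h
  have hM0eq : M0 = Umatᵀ * (Vmat.submatrix ⇑σe ⇑σe) := by
    ext i j
    rw [hM0def]
    simp only [Matrix.submatrix_apply, id_eq]
    rw [hentry d0 i (σe j)]
    have hstep : ∀ e : Fin N, A e ↑i * (d0 e * A e ↑(σe j)) =
        if e ∈ SS then A e ↑i * A e ↑(σe j) else 0 := by
      intro e
      rw [hd0def]
      by_cases hss : e ∈ SS <;> simp [hss]
    rw [Finset.sum_congr rfl (fun e _ => hstep e), Finset.sum_ite_mem,
      Finset.univ_inter, hSSdef, Finset.sum_image hfXinj']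
    rw [Matrix.mul_apply]
    apply Finset.sum_congr rfl
    intro w _
    simp only [hUmatdef, hVmatdef, Matrix.transpose_apply, Matrix.submatrix_apply,
      Matrix.of_apply]
    have hcompat' : fX w = fY (σe w) := hcompat w
    rw [← hcompat']
  have hdetM0 : M0.det ≠ 0 := by
    rw [hM0eq, Matrix.det_mul, Matrix.det_transpose, Matrix.det_submatrix_equiv_self σe Vmat]
    exact mul_ne_zero hdetU hdetV
  obtain ⟨ε, hε0, hεdet⟩ := aux_exists_perturb M0 M1 hdetM0
  refine ⟨fun e => if e ∈ SS then (1 : ℝ) else ε, ?_, ?_⟩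
  · intro e
    by_cases hss : e ∈ SS
    · simp [hss]
    · simp [hss, hε0]
  set dv : Fin N → ℝ := fun e => if e ∈ SS then (1 : ℝ) else ε with hdvdef
  set Gm : Matrix {x // x ∈ C ∪ M} {x // x ∈ C ∪ O} ℝ :=
    Xmᵀ * Matrix.diagonal dv * Ym with hGmdef
  have hsplit : Gm.submatrix id ⇑σe = M0 + ε • M1 := by
    ext i j
    rw [hGmdef, hM0def, hM1def]
    simp only [Matrix.submatrix_apply, Matrix.add_apply, Matrix.smul_apply, id_eq,
      smul_eq_mul]
    rw [hentry dv i (σe j), hentry d0 i (σe j), hentry d1 i (σe j), Finset.mul_sum,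
      ← Finset.sum_add_distrib]
    apply Finset.sum_congr rfl
    intro e _
    by_cases hss : e ∈ SS
    · simp only [hdvdef, hd0def, hd1def, if_pos hss]; ring
    · simp only [hdvdef, hd0def, hd1def, if_neg hss]; ring
  have hdetG : (Gm.submatrix id ⇑σe).det ≠ 0 := by rw [hsplit]; exact hεdet
  have hunit : IsUnit (Gm.submatrix id ⇑σe) :=
    (Matrix.isUnit_iff_isUnit_det _).mpr (isUnit_iff_ne_zero.mpr hdetG)
  have hrank1 : (Gm.submatrix id ⇑σe).rank = Fintype.card {x // x ∈ C ∪ M} :=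
    Matrix.rank_of_isUnit _ hunit
  set Pm : Matrix {x // x ∈ C ∪ O} {x // x ∈ C ∪ M} ℝ :=
    Matrix.of (fun b a => if σe a = b then 1 else 0) with hPmdef
  have hGP : Gm.submatrix id ⇑σe = Gm * Pm := by
    ext i a
    rw [Matrix.mul_apply]
    simp only [Matrix.submatrix_apply, id_eq, hPmdef, Matrix.of_apply, mul_ite, mul_one,
      mul_zero]
    rw [Finset.sum_ite_eq Finset.univ (σe a) (fun b => Gm i b)]
    simp
  have hle1 : Fintype.card {x // x ∈ C ∪ M} ≤ Gm.rank := by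
    rw [← hrank1, hGP]
    exact Matrix.rank_mul_le_left _ _
  have hle2 : Gm.rank ≤ Fintype.card {x // x ∈ C ∪ M} := Matrix.rank_le_card_height Gm
  have hfin : Gm.rank = (C ∪ M).card := by
    rw [le_antisymm hle2 hle1, Fintype.card_coe]
  exact hfin
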